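/- Let C ∈ SO₀(2,1) with c₁₁ > 1, and let C = s₁ k₁ be its unique decomposition with s₁ symmetric and k₁ = 1 ⊕ R(η) the rotation by angle η. Then cos η = (c₂₂ + c₃₃)/(1 + c₁₁) and sin η = (c₃₂ − c₂₃)/(1 + c₁₁). -/
import Mathlib

open Matrix
noncomputable def Imat : Matrix (Fin 3) (Fin 3) ℝ := diagonal ![-1, 1, 1]
noncomputable def amat : Matrix (Fin 3) (Fin 3) ℝ := !![0,1,0; 1,0,0; 0,0,0]
noncomputable def bmat : Matrix (Fin 3) (Fin 3) ℝ := !![0,0,1; 0,0,0; 1,0,0]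
noncomputable def cmat : Matrix (Fin 3) (Fin 3) ℝ := !![0,0,0; 0,0,-1; 0,1,0]
noncomputable def rot2 (η : ℝ) : Matrix (Fin 2) (Fin 2) ℝ :=
  !![Real.cos η, -Real.sin η; Real.sin η, Real.cos η]
noncomputable def Kmat (η : ℝ) : Matrix (Fin 3) (Fin 3) ℝ :=
  !![1,0,0; 0,Real.cos η,-Real.sin η; 0,Real.sin η,Real.cos η]
def inSO21 (C : Matrix (Fin 3) (Fin 3) ℝ) : Prop :=
  C⁻¹ = Imat * Cᵀ * Imat ∧ C.det = 1 ∧ 1 ≤ C 0 0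

/-- Key scalar lemma: a symmetric matrix `!![a,b,c; b,d,e; c,e,f]` in SO₀(2,1)
with `a > 1` satisfies `d + f = a + 1`. -/
lemma trace_key (a b c d e f : ℝ) (ha : 1 < a)
    (h1 : b^2 + c^2 = a^2 - 1)
    (h2 : d^2 + e^2 = 1 + b^2)
    (h3 : e^2 + f^2 = 1 + c^2)
    (h4 : b*d + c*e = a*b)
    (h5 : b*e + c*f = a*c)
    (h6 : d*e + e*f = b*c)
    (hdet : a*d*f + 2*b*c*e - a*e^2 - b^2*f - c^2*d = 1) :
    d + f = a + 1 := by
  have hbf : b^2*f + c^2*d = (a^2-1)*(d+f-a) + 2*b*c*e := by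
    linear_combination (d+f-a)*h1 - b*h4 - c*h5
  have hdf : 2*(d*f - e^2) = (d+f)^2 - a^2 - 1 := by
    linear_combination -h2 - h3 - h1
  have P1 : (d+f-a-1)*(a*(d+f) - (a+1)*(a-2)) = 0 := by
    linear_combination 2*hdet - a*hdf + 2*hbf
  have P2 : e*((d+f-a-1)*(d+f-a+1)) = 0 := by
    linear_combination (d+f-2*a)*h6 + b*h5 + c*h4 - e*h1
  rcases mul_eq_zero.mp P1 with h | hau
  · linarith
  · have hau : a*(d+f) = (a+1)*(a-2) := by linarith
    rcases mul_eq_zero.mp P2 with he | hp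
    · have hbc : b*c = 0 := by linear_combination (d+f)*he - h6
      rcases mul_eq_zero.mp hbc with hb | hc
      · have hc2 : c^2 = a^2 - 1 := by linear_combination h1 - b*hb
        have hcne : c ≠ 0 := by
          intro h0
          rw [h0] at hc2
          nlinarith
        have hfa : f = a := by
          have h' : c*(f - a) = 0 := by linear_combination h5 - b*he
          rcases mul_eq_zero.mp h' with h'' | h''
          · exact absurd h'' hcne
          · linarith
        have hd1 : d = 1 := by
          linear_combination hdet + d*hc2 - a*d*hfa + (a*e - 2*b*c)*he + b*f*hb
        have : (2:ℝ)*a + 2 = 0 := by linear_combination hau - a*hd1 - a*hfa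
        linarith
      · have hb2 : b^2 = a^2 - 1 := by linear_combination h1 - c*hc
        have hbne : b ≠ 0 := by
          intro h0
          rw [h0] at hb2
          nlinarith
        have hda : d = a := by
          have h' : b*(d - a) = 0 := by linear_combination h4 - c*he
          rcases mul_eq_zero.mp h' with h'' | h''
          · exact absurd h'' hbne
          · linarith
        have hf1 : f = 1 := by
          linear_combination hdet + f*hb2 - a*f*hda + (a*e - 2*b*c)*he + c*d*hc
        have : (2:ℝ)*a + 2 = 0 := by linear_combination hau - a*hf1 - a*hda
        linarith
    · rcases mul_eq_zero.mp hp with h' | h'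
      · linarith
      · have : (2:ℝ) = 0 := by linear_combination hau - a*h'
        linarith

theorem stmt18 (C s₁ : Matrix (Fin 3) (Fin 3) ℝ) (η : ℝ)
    (hC : inSO21 C) (h11 : 1 < C 0 0)
    (hs₁ : s₁ᵀ = s₁) (hs₁SO : inSO21 s₁) (hfac : C = s₁ * Kmat η) :
    Real.cos η = (C 1 1 + C 2 2) / (1 + C 0 0) ∧
    Real.sin η = (C 2 1 - C 1 2) / (1 + C 0 0) := by
  obtain ⟨hsinv, hsdet, -⟩ := hs₁SO
  have hsym : ∀ i j, s₁ j i = s₁ i j := fun i j => congrFun (congrFun hs₁ i) j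
  have hsu : IsUnit s₁.det := by rw [hsdet]; exact isUnit_one
  have hmul : s₁ * (Imat * s₁ * Imat) = 1 := by
    have h := Matrix.mul_nonsing_inv s₁ hsu
    rw [hsinv, hs₁] at h
    exact h
  have E : ∀ i j, (s₁ * (Imat * s₁ * Imat)) i j = (1 : Matrix (Fin 3) (Fin 3) ℝ) i j :=
    fun i j => by rw [hmul]
  have e00 := E 0 0
  have e11 := E 1 1
  have e22 := E 2 2
  have e01 := E 0 1
  have e02 := E 0 2
  have e12 := E 1 2
  simp [Matrix.mul_apply, Fin.sum_univ_three, Imat, Matrix.diagonal, Matrix.one_apply,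
    hsym 0 1, hsym 0 2, hsym 1 2] at e00 e11 e22 e01 e02 e12
  rw [Matrix.det_fin_three] at hsdet
  rw [hsym 0 1, hsym 0 2, hsym 1 2] at hsdet
  have hCe : ∀ i j, C i j = (s₁ * Kmat η) i j := fun i j => by rw [hfac]
  have hC00 := hCe 0 0
  have hC11 := hCe 1 1
  have hC22 := hCe 2 2
  have hC21 := hCe 2 1
  have hC12 := hCe 1 2
  simp [Matrix.mul_apply, Fin.sum_univ_three, Kmat, Matrix.vecHead, Matrix.vecTail,
    hsym 1 2] at hC00 hC11 hC22 hC21 hC12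
  have ha : 1 < s₁ 0 0 := by rw [hC00] at h11; exact h11
  have key : s₁ 1 1 + s₁ 2 2 = s₁ 0 0 + 1 :=
    trace_key (s₁ 0 0) (s₁ 0 1) (s₁ 0 2) (s₁ 1 1) (s₁ 1 2) (s₁ 2 2) ha
      (by linear_combination -e00) (by linear_combination e11) (by linear_combination e22)
      (by linear_combination e01) (by linear_combination e02) (by linear_combination e12)
      (by linear_combination hsdet)
  have hden : (1 : ℝ) + C 0 0 ≠ 0 := by nlinarith
  constructor
  · rw [eq_div_iff hden]
    rw [hC00, hC11, hC22]
    linear_combination -Real.cos η * key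
  · rw [eq_div_iff hden]
    rw [hC00, hC21, hC12]
    linear_combination -Real.sin η * key
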